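/- If V ⊆ ℝ is a Bernstein set and E ⊆ ℝ is a Lebesgue measurable set of positive measure, then there exists a rational r such that (V + r) ∩ E is not Lebesgue null; moreover E \ ((V + r) ∩ E) contains no closed set of positive measure. -/

import Mathlib

open MeasureTheory

lemma perfect_translate {D : Set ℝ} (h : Perfect D) (r : ℝ) :
    Perfect ((fun x => x + r) '' D) := by
  constructor
  · exact ((Homeomorph.addRight r).isClosedMap) _ h.closed
  · rintro y ⟨x, hxD, rfl⟩
    have := (h.acc x hxD).map (f := fun x => x + r)
      (continuous_id.add continuous_const).continuousAt
      (fun a b hab => by simpa using hab)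
    simpa [Filter.map_principal] using this

/-- A closed set of positive measure contains a nonempty perfect subset. -/
lemma exists_perfect_of_closed_pos {C : Set ℝ} (hC : IsClosed C) (hpos : volume C ≠ 0) :
    ∃ D : Set ℝ, Perfect D ∧ D.Nonempty ∧ D ⊆ C := by
  obtain ⟨W, D, Wct, Dperf, rfl⟩ := exists_countable_union_perfect_of_isClosed hC
  refine ⟨D, Dperf, ?_, Set.subset_union_right⟩
  rcases D.eq_empty_or_nonempty with rfl | hne
  · exfalso
    apply hpos
    have : volume (W ∪ (∅ : Set ℝ)) ≤ volume W + volume (∅ : Set ℝ) :=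
      measure_union_le _ _
    simpa [Wct.measure_zero] using this
  · exact hne

theorem stmt5 (V : Set ℝ)
    (hV : ∀ P : Set ℝ, Perfect P → P.Nonempty → (P ∩ V).Nonempty ∧ (P ∩ Vᶜ).Nonempty)
    (E : Set ℝ) (hE : MeasurableSet E) (hpos : 0 < volume E) :
    ∃ r : ℚ, volume (((fun x => x + (r : ℝ)) '' V) ∩ E) ≠ 0 ∧
      ∀ C : Set ℝ, IsClosed C → C ⊆ E \ (((fun x => x + (r : ℝ)) '' V) ∩ E) →
        volume C = 0 := by
  -- Second part holds for every r.
  have key : ∀ r : ℚ, ∀ C : Set ℝ, IsClosed C →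
      C ⊆ E \ (((fun x => x + (r : ℝ)) '' V) ∩ E) → volume C = 0 := by
    intro r C hCcl hCsub
    by_contra hne
    obtain ⟨D, Dperf, Dne, DsubC⟩ := exists_perfect_of_closed_pos hCcl hne
    -- translate D by -r to get a perfect set, intersect with V
    have Dperf' : Perfect ((fun x => x + (-(r : ℝ))) '' D) := perfect_translate Dperf _
    obtain ⟨y, hy1, hy2⟩ := (hV _ Dperf' (Dne.image _)).1
    obtain ⟨x, hxD, rfl⟩ := hy1
    have hxE : x ∈ E := (hCsub (DsubC hxD)).1
    have : x ∈ (fun x => x + (r : ℝ)) '' V := ⟨x + -(r : ℝ), hy2, by ring⟩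
    exact (hCsub (DsubC hxD)).2 ⟨this, hxE⟩
  -- First part: some r gives nonzero measure.
  by_contra hcon
  push_neg at hcon
  have hall : ∀ r : ℚ, volume (((fun x => x + (r : ℝ)) '' V) ∩ E) = 0 := by
    intro r
    by_contra h
    obtain ⟨C, hC1, hC2, hC3⟩ := hcon r h
    exact hC3 (key r C hC1 hC2)
  set N : Set ℝ := ⋃ r : ℚ, ((fun x => x + (r : ℝ)) '' V) ∩ E with hN
  have hNnull : volume N = 0 :=
    le_antisymm ((measure_iUnion_le _).trans
      (le_of_eq (ENNReal.tsum_eq_zero.mpr hall))) zero_le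
  obtain ⟨N', hNsub, hN'meas, hN'null⟩ := exists_measurable_superset_of_null hNnull
  have hEN : 0 < volume (E \ N') := by
    have := measure_diff_null (μ := volume) (s := E) hN'null
    rw [this]; exact hpos
  obtain ⟨K, hKsub, hKcomp, hKpos⟩ :=
    (hE.diff hN'meas).exists_lt_isCompact hEN
  obtain ⟨D, Dperf, Dne, DsubK⟩ := exists_perfect_of_closed_pos hKcomp.isClosed
    (by exact fun h => absurd h (by rw [h] at hKpos; exact absurd hKpos (lt_irrefl 0)))
  obtain ⟨x, hxD, hxV⟩ := (hV D Dperf Dne).1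
  have hxE : x ∈ E := (hKsub (DsubK hxD)).1
  have hxN : x ∈ N := Set.mem_iUnion.2 ⟨0, ⟨⟨x, hxV, by simp⟩, hxE⟩⟩
  exact (hKsub (DsubK hxD)).2 (hNsub hxN)
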